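/- Let (X,d) be a finite ultrametric and α > 1 its representation as an α-HST with tree T and labels ℓ. Suppose points of X arrive in some order, and the online algorithm connects each arriving point v (other than the first) to the earliest-arrived point u among all nearest neighbors of v in the current point set, producing a spanning tree H. Then for every pair of points u,v ∈ X, d_H(u,v) ≤ 2·(α/(α−1))·d(u,v). -/

import Mathlib

/-- Weight of a path with respect to a real-valued weight function on pairs. -/
noncomputable def rPath {V : Type*} (w : V → V → ℝ) : List V → ℝ
  | [] => 0
  | [_] => 0
  | a :: b :: rest => w a b + rPath w (b :: rest)



lemma rPath_nil {V : Type*} (w : V → V → ℝ) : rPath w [] = 0 := rfl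
lemma rPath_single {V : Type*} (w : V → V → ℝ) (a : V) : rPath w [a] = 0 := rfl
lemma rPath_cons_cons {V : Type*} (w : V → V → ℝ) (a b : V) (t : List V) :
    rPath w (a :: b :: t) = w a b + rPath w (b :: t) := rfl

lemma rPath_glue {V : Type*} (w : V → V → ℝ) :
    ∀ (p : List V) (x : V) (s : List V), p.getLast? = some x →
      rPath w (p ++ s) = rPath w p + rPath w (x :: s)
  | [], x, s, h => by simp at h
  | [a], x, s, h => by
      simp only [List.getLast?_singleton, Option.some.injEq] at h
      subst h; simp [rPath_single]
  | a :: b :: t, x, s, h => by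
      have := rPath_glue w (b :: t) x s (by simpa using h)
      simp only [List.cons_append] at this ⊢
      rw [rPath_cons_cons, rPath_cons_cons, this]; ring

lemma rPath_reverse {V : Type*} (w : V → V → ℝ) (hs : ∀ a b, w a b = w b a) :
    ∀ l : List V, rPath w l.reverse = rPath w l
  | [] => rfl
  | [a] => rfl
  | a :: b :: t => by
      have h1 : (b :: t).reverse.getLast? = some b := by
        simp [List.getLast?_reverse]
      have h2 := rPath_glue w (b :: t).reverse b [a] h1
      have h3 : (a :: b :: t).reverse = (b :: t).reverse ++ [a] := by
        simp
      rw [h3, h2, rPath_reverse w hs (b :: t), rPath_cons_cons, rPath_cons_cons,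
        rPath_single, hs b a]
      ring

lemma hst_key (n : ℕ) (d : Fin n → Fin n → ℝ)
    (hsymm : ∀ u v, d u v = d v u) (hself : ∀ u, d u u = 0)
    (hpos : ∀ u v, u ≠ v → 0 < d u v)
    (hult : ∀ x y z, d x z ≤ max (d x y) (d y z))
    (α : ℝ) (hα : 1 < α)
    (hHST : ∀ u v x y, 0 < d u v → 0 < d x y → d u v < d x y → α * d u v ≤ d x y)
    (parent : Fin n → Fin n)
    (hpar : ∀ i : Fin n, 0 < (i : ℕ) →
      parent i < i ∧ (∀ j : Fin n, j < i → d (parent i) i ≤ d j i) ∧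
        (∀ j : Fin n, j < i → d j i = d (parent i) i → parent i ≤ j)) :
    ∀ (N : ℕ) (x c : Fin n) (r : ℝ), (x : ℕ) < N → 0 < r → d c x ≤ r →
      (∀ j, d j x ≤ r → c ≤ j) →
      ∃ p : List (Fin n), p.head? = some x ∧ p.getLast? = some c ∧
        List.Chain' (fun (x y : Fin n) =>
          (0 < (x : ℕ) ∧ parent x = y) ∨ (0 < (y : ℕ) ∧ parent y = x)) p ∧
        (∀ y ∈ p, d y x ≤ r) ∧
        rPath d p ≤ α / (α - 1) * r ∧
        (p = [x] ∨ ∃ t, p = x :: parent x :: t ∧ 0 < (x : ℕ) ∧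
          rPath d p + d (parent x) x / (α - 1) ≤ α / (α - 1) * r) := by
  have hα1 : (0:ℝ) < α - 1 := by linarith
  have hα0 : (0:ℝ) < α := by linarith
  intro N
  induction N with
  | zero => intro x c r hx; omega
  | succ N ih =>
    intro x c r hxN hr hcball hcmin
    -- c ≤ x
    have hcx : c ≤ x := hcmin x (by rw [hself]; exact hr.le)
    rcases eq_or_lt_of_le hcx with hceq | hclt
    · -- trivial path
      refine ⟨[x], rfl, by simp [hceq], List.isChain_singleton x, ?_, ?_, Or.inl rfl⟩
      · intro y hy; simp at hy; subst hy; rw [hself]; exact hr.le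
      · show (0:ℝ) ≤ α / (α - 1) * r
        positivity
    · -- c < x
      have hxpos : 0 < (x : ℕ) := by
        have h := Fin.lt_def.mp hclt; omega
      obtain ⟨hp1, hp2, hp3⟩ := hpar x hxpos
      set m := d (parent x) x with hm_def
      have hm_pos : 0 < m := hpos _ _ (Fin.ne_of_lt hp1)
      have hm_le : m ≤ r := le_trans (hp2 c hclt) hcball
      -- IH ball hypotheses for parent x
      have hball1 : d c (parent x) ≤ r := by
        refine le_trans (hult c x (parent x)) (max_le hcball ?_)
        rw [hsymm]; exact hm_le
      have hball2 : ∀ j, d j (parent x) ≤ r → c ≤ j := by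
        intro j hj
        exact hcmin j (le_trans (hult j (parent x) x) (max_le hj hm_le))
      have hpxN : ((parent x : Fin n) : ℕ) < N := by
        have h := Fin.lt_def.mp hp1; omega
      obtain ⟨q, hqh, hql, hqc, hqball, hqw, hqalt⟩ :=
        ih (parent x) c r hpxN hr hball1 hball2
      -- q = parent x :: q₁
      obtain ⟨q₁, rfl⟩ : ∃ q₁, q = parent x :: q₁ := by
        cases q with
        | nil => simp at hqh
        | cons a t => simp at hqh; exact ⟨t, by rw [hqh]⟩
      refine ⟨x :: parent x :: q₁, rfl, ?_, ?_, ?_, ?_⟩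
      · rw [List.getLast?_cons_cons]; exact hql
      · exact List.IsChain.cons_cons (Or.inl ⟨hxpos, rfl⟩) hqc
      · intro y hy
        rcases List.mem_cons.1 hy with rfl | hy'
        · rw [hself]; exact hr.le
        · exact le_trans (hult y (parent x) x)
            (max_le (hqball y hy') hm_le)
      · -- weight bounds
        have hw_eq : rPath d (x :: parent x :: q₁)
            = d x (parent x) + rPath d (parent x :: q₁) := rfl
        have hxm : d x (parent x) = m := hsymm x (parent x)
        rcases hqalt with hq1 | ⟨t, hqeq, hppos, hqb⟩
        · -- q = [parent x], so parent x = c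
          have hq1' : q₁ = [] := congrArg List.tail hq1
          subst hq1'
          have hbound : m + m / (α - 1) ≤ α / (α - 1) * r := by
            have : m + m / (α - 1) = α / (α - 1) * m := by
              field_simp; ring
            rw [this]
            exact mul_le_mul_of_nonneg_left hm_le (by positivity)
          constructor
          · rw [hw_eq, hxm]
            simp only [rPath]
            have : (0:ℝ) ≤ m / (α - 1) := by positivity
            linarith
          · refine Or.inr ⟨[], rfl, hxpos, ?_⟩
            rw [hw_eq, hxm]
            simp only [rPath]
            linarith
        · -- q = parent x :: parent (parent x) :: t
          have hq₁ : q₁ = parent (parent x) :: t := congrArg List.tail hqeq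
          subst hq₁
          set m₂ := d (parent (parent x)) (parent x) with hm2_def
          have hpp_lt : parent (parent x) < parent x := (hpar (parent x) hppos).1
          have hpp_lt_x : parent (parent x) < x := lt_trans hpp_lt hp1
          -- m < m₂
          have hm_lt_m2 : m < m₂ := by
            by_contra hcon
            push_neg at hcon
            have h4 : d (parent (parent x)) x ≤ m :=
              le_trans (hult (parent (parent x)) (parent x) x)
                (max_le hcon le_rfl)
            have h5 : m ≤ d (parent (parent x)) x := hp2 _ hpp_lt_x
            have h6 : d (parent (parent x)) x = m := le_antisymm h4 h5
            have := hp3 _ hpp_lt_x h6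
            exact absurd this (not_le.2 hpp_lt)
          have hm2_pos : 0 < m₂ := lt_trans hm_pos hm_lt_m2
          have hαm : α * m ≤ m₂ := hHST _ _ _ _ hm_pos hm2_pos hm_lt_m2
          -- main computation
          have hqw' : rPath d (parent x :: parent (parent x) :: t)
              + m₂ / (α - 1) ≤ α / (α - 1) * r := hqb
          have hcomp : rPath d (x :: parent x :: parent (parent x) :: t)
              + m / (α - 1) ≤ α / (α - 1) * r := by
            rw [hw_eq, hxm]
            have h7 : m + m / (α - 1) = α * m / (α - 1) := by
              field_simp; ring
            have h8 : α * m / (α - 1) ≤ m₂ / (α - 1) := by gcongr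
            simp only [rPath_cons_cons] at hqw' ⊢
            linarith
          refine ⟨?_, Or.inr ⟨_, rfl, hxpos, hcomp⟩⟩
          have : (0:ℝ) ≤ m / (α - 1) := by positivity
          linarith

/-- Let `d` be an `α`-HST metric on `n` points (an ultrametric whose distinct
positive distances are separated by factors of at least `α`), with points
arriving in index order. The online algorithm connects each arriving point `i`
(other than the first) to the earliest-arrived point among its nearest earlier
neighbors, `parent i`, producing a spanning tree `H`. Then for every pair `u,v`,
`d_H(u,v) ≤ 2·(α/(α−1))·d(u,v)`. -/
theorem hst_online_tree_stretch (n : ℕ) (d : Fin n → Fin n → ℝ)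
    (hsymm : ∀ u v, d u v = d v u) (hself : ∀ u, d u u = 0)
    (hpos : ∀ u v, u ≠ v → 0 < d u v)
    (hult : ∀ x y z, d x z ≤ max (d x y) (d y z))
    (α : ℝ) (hα : 1 < α)
    (hHST : ∀ u v x y, 0 < d u v → 0 < d x y → d u v < d x y → α * d u v ≤ d x y)
    (parent : Fin n → Fin n)
    (hpar : ∀ i : Fin n, 0 < (i : ℕ) →
      parent i < i ∧ (∀ j : Fin n, j < i → d (parent i) i ≤ d j i) ∧
        (∀ j : Fin n, j < i → d j i = d (parent i) i → parent i ≤ j)) :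
    ∀ u v : Fin n, ∃ p : List (Fin n),
      p.head? = some u ∧ p.getLast? = some v ∧
      List.Chain' (fun (x y : Fin n) =>
        (0 < (x : ℕ) ∧ parent x = y) ∨ (0 < (y : ℕ) ∧ parent y = x)) p ∧
      rPath d p ≤ 2 * (α / (α - 1)) * d u v := by
  intro u v
  by_cases huv : u = v
  · subst huv
    refine ⟨[u], rfl, rfl, List.isChain_singleton u, ?_⟩
    rw [rPath_single, hself]
    simp
  · set D := d u v with hD_def
    have hD : 0 < D := hpos u v huv
    set S : Finset (Fin n) := Finset.univ.filter (fun j => d j u ≤ D) with hS_def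
    have huS : u ∈ S := by simp [hS_def, hself, hD.le]
    set c : Fin n := S.min' ⟨u, huS⟩ with hc_def
    have hc_mem : d c u ≤ D := by
      have := S.min'_mem ⟨u, huS⟩
      simpa [hS_def] using this
    have hc_min : ∀ j, d j u ≤ D → c ≤ j := by
      intro j hj
      exact S.min'_le j (by simp [hS_def, hj])
    have hcv_mem : d c v ≤ D := le_trans (hult c u v) (max_le hc_mem le_rfl)
    have hcv_min : ∀ j, d j v ≤ D → c ≤ j := by
      intro j hj
      refine hc_min j (le_trans (hult j v u) (max_le hj ?_))
      rw [hsymm v u]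
    obtain ⟨p, hph, hpl, hpc, -, hpw, -⟩ :=
      hst_key n d hsymm hself hpos hult α hα hHST parent hpar n u c D u.isLt hD hc_mem hc_min
    obtain ⟨q, hqh, hql, hqc, -, hqw, -⟩ :=
      hst_key n d hsymm hself hpos hult α hα hHST parent hpar n v c D v.isLt hD hcv_mem hcv_min
    set R : Fin n → Fin n → Prop := fun x y =>
      (0 < (x : ℕ) ∧ parent x = y) ∨ (0 < (y : ℕ) ∧ parent y = x) with hR_def
    have hq'c : List.Chain' R q.reverse := by
      rw [List.Chain', List.isChain_reverse]
      exact List.IsChain.imp (fun a b h => Or.symm h) hqc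
    have hq'h : q.reverse.head? = some c := by rw [List.head?_reverse]; exact hql
    have hq'l : q.reverse.getLast? = some v := by rw [List.getLast?_reverse]; exact hqh
    obtain ⟨s, hq'eq⟩ : ∃ s, q.reverse = c :: s := by
      cases hq : q.reverse with
      | nil => rw [hq] at hq'h; simp at hq'h
      | cons a t =>
        rw [hq] at hq'h; simp at hq'h
        exact ⟨t, by rw [hq'h]⟩
    have hpw' : rPath d p ≤ α / (α - 1) * D := hpw
    have hqw' : rPath d q.reverse ≤ α / (α - 1) * D := by
      rw [rPath_reverse d hsymm]; exact hqw
    refine ⟨p ++ s, ?_, ?_, ?_, ?_⟩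
    · obtain ⟨p₁, rfl⟩ : ∃ p₁, p = u :: p₁ := by
        cases hp : p with
        | nil => rw [hp] at hph; simp at hph
        | cons a t =>
          rw [hp] at hph; simp at hph
          exact ⟨t, by rw [hph]⟩
      rfl
    · cases s with
      | nil =>
        have hq1 : q.reverse = [c] := hq'eq
        rw [hq1] at hq'l
        simp only [List.getLast?_singleton, Option.some.injEq] at hq'l
        simpa [hq'l] using hpl
      | cons b s' =>
        rw [List.getLast?_append]
        rw [hq'eq, List.getLast?_cons_cons] at hq'l
        rw [hq'l]
        rfl
    · rw [List.Chain', List.isChain_append]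
      refine ⟨hpc, ?_, ?_⟩
      · have := hq'c
        rw [hq'eq] at this
        exact (List.isChain_cons.mp this).2
      · intro a ha b hb
        rw [hpl] at ha
        simp only [Option.mem_def, Option.some.injEq] at ha
        subst ha
        have := hq'c
        rw [hq'eq] at this
        exact (List.isChain_cons.mp this).1 b hb
    · have hglue := rPath_glue d p c s hpl
      rw [hglue]
      have : rPath d (c :: s) = rPath d q.reverse := by rw [hq'eq]
      rw [this]
      have h2 : 2 * (α / (α - 1)) * D = α / (α - 1) * D + α / (α - 1) * D := by ring
      rw [hD_def] at h2 ⊢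
      rw [h2]
      exact add_le_add hpw' hqw'
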